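/- Let t ∈ (0,1), let a, b : ℝ → ℝ be continuous on a neighbourhood of t, and let f : ℝ → ℝ be continuously differentiable on a neighbourhood of t with f(t) > 0. For h > 0 small and τ ∈ [0,1] define I(h,τ) := ∫₀^τ exp(−∫₀^{hr} a(t+s) ds)·f(t+hr)·exp(−∫_{hr}^{h} b(t+s) ds) dr, and set χ := f′(t)/f(t) + b(t) − a(t). Then, as h → 0⁺: (i) for every fixed τ ∈ [0,1], I(h,τ) = f(t)·(τ + h·(χ·τ²/2 − b(t)·τ)) + o(h); (ii) I(h,1/2)/I(h,1) = 1/2 − (h/8)·χ + o(h). -/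

import Mathlib

open Asymptotics

/-- The quantity `I(h,τ) = ∫₀^τ exp(−∫₀^{hr} a(t+s) ds) · f(t+hr) · exp(−∫_{hr}^h b(t+s) ds) dr`
appearing in the short-time expansion of the one-jump conditional probabilities. -/
noncomputable def oneJumpIntegral (t : ℝ) (a b f : ℝ → ℝ) (h τ : ℝ) : ℝ :=
  ∫ r in (0 : ℝ)..τ,
    Real.exp (-(∫ s in (0 : ℝ)..(h * r), a (t + s))) * f (t + h * r) *
      Real.exp (-(∫ s in (h * r)..h, b (t + s)))

section aux

open MeasureTheory intervalIntegral Filter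

noncomputable def primI (g : ℝ → ℝ) (x : ℝ) : ℝ := ∫ s in (0:ℝ)..x, g s

lemma primI_hasDerivAt {g : ℝ → ℝ} (hg : Continuous g) (x : ℝ) :
    HasDerivAt (primI g) (g x) x :=
  integral_hasDerivAt_right (hg.intervalIntegrable 0 x)
    (hg.stronglyMeasurableAtFilter _ _) hg.continuousAt

lemma primI_zero (g : ℝ → ℝ) : primI g 0 = 0 := integral_same

lemma primI_continuous {g : ℝ → ℝ} (hg : Continuous g) : Continuous (primI g) := by
  have : Differentiable ℝ (primI g) := fun x => (primI_hasDerivAt hg x).differentiableAt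
  exact this.continuous

noncomputable def phiF (t : ℝ) (a b f : ℝ → ℝ) (u : ℝ) : ℝ :=
  Real.exp (primI (fun s => b (t+s)) u - primI (fun s => a (t+s)) u) * f (t + u)

noncomputable def PhiF (t : ℝ) (a b f : ℝ → ℝ) (x : ℝ) : ℝ := ∫ u in (0:ℝ)..x, phiF t a b f u

variable {t : ℝ} {a b f f' : ℝ → ℝ}

lemma phiF_continuous (hca : Continuous a) (hcb : Continuous b) (hcf : Continuous f) :
    Continuous (phiF t a b f) := by
  apply Continuous.mul
  · exact Real.continuous_exp.comp ((primI_continuous (hcb.comp (by continuity))).sub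
      (primI_continuous (hca.comp (by continuity))))
  · exact hcf.comp (by continuity)

lemma phiF_zero : phiF t a b f 0 = f t := by
  simp [phiF, primI_zero]

lemma phiF_hasDerivAt_zero (hca : Continuous a) (hcb : Continuous b)
    (hdf : ∀ s, HasDerivAt f (f' s) s) :
    HasDerivAt (phiF t a b f) (f' t + (b t - a t) * f t) 0 := by
  have hA : HasDerivAt (primI (fun s => a (t+s))) (a (t+0)) 0 :=
    primI_hasDerivAt (hca.comp (by continuity)) 0
  have hB : HasDerivAt (primI (fun s => b (t+s))) (b (t+0)) 0 :=
    primI_hasDerivAt (hcb.comp (by continuity)) 0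
  have hf0 : HasDerivAt (fun u : ℝ => f (t + u)) (f' t) 0 := by
    have := (hdf (t + 0)).comp 0 ((hasDerivAt_id 0).const_add t)
    simpa [Function.comp_def] using this
  have hE : HasDerivAt (fun u => Real.exp (primI (fun s => b (t+s)) u - primI (fun s => a (t+s)) u))
      (b t - a t) 0 := by
    have h1 := (hB.sub hA)
    have := h1.exp
    simpa [primI_zero] using this
  have h2 := hE.mul hf0
  have heq : (b t - a t) * f (t + 0) +
      Real.exp (primI (fun s => b (t+s)) 0 - primI (fun s => a (t+s)) 0) * f' t
      = f' t + (b t - a t) * f t := by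
    simp [primI_zero]; ring
  rw [heq] at h2
  exact h2

/-- Definition unfolding lemma -/
lemma oneJump_eq (hca : Continuous a) (hcb : Continuous b) (hcf : Continuous f)
    {h : ℝ} (hh : h ≠ 0) (τ : ℝ) :
    oneJumpIntegral t a b f h τ =
      Real.exp (-(primI (fun s => b (t+s)) h)) * (PhiF t a b f (h * τ) / h) := by
  have hbc : Continuous fun s => b (t + s) := hcb.comp (by continuity)
  have step1 : ∀ r : ℝ,
      Real.exp (-(∫ s in (0:ℝ)..(h*r), a (t+s))) * f (t + h*r) *
        Real.exp (-(∫ s in (h*r)..h, b (t+s)))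
      = Real.exp (-(primI (fun s => b (t+s)) h)) * phiF t a b f (h*r) := by
    intro r
    have hsub : primI (fun s => b (t+s)) h - primI (fun s => b (t+s)) (h*r)
        = ∫ s in (h*r)..h, b (t+s) :=
      integral_interval_sub_left (hbc.intervalIntegrable 0 h) (hbc.intervalIntegrable 0 (h*r))
    rw [← hsub]
    show Real.exp (-(primI (fun s => a (t+s)) (h*r))) * f (t + h*r) * _ = _
    rw [phiF, mul_right_comm, ← Real.exp_add, ← mul_assoc, ← Real.exp_add]
    congr 1
    rw [Real.exp_eq_exp]
    ring
  unfold oneJumpIntegral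
  rw [integral_congr (g := fun r => Real.exp (-(primI (fun s => b (t+s)) h)) * phiF t a b f (h*r))
    (fun r _ => step1 r), intervalIntegral.integral_const_mul]
  congr 1
  rw [integral_comp_mul_left (fun u => phiF t a b f u) hh]
  simp [PhiF, smul_eq_mul, div_eq_inv_mul]


lemma Phi_taylor (hca : Continuous a) (hcb : Continuous b)
    (hdf : ∀ s, HasDerivAt f (f' s) s) :
    (fun x => PhiF t a b f x - f t * x - (f' t + (b t - a t) * f t) * x^2 / 2)
      =o[nhdsWithin 0 (Set.Ioi 0)] fun x => x^2 := by
  set c : ℝ := f' t + (b t - a t) * f t with hc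
  have hcf : Continuous f := Differentiable.continuous (fun x => (hdf x).differentiableAt)
  have hφ : Continuous (phiF t a b f) := phiF_continuous hca hcb hcf
  set g : ℝ → ℝ := fun u => phiF t a b f u - f t - c * u with hgdef
  have hg : Continuous g := by fun_prop
  have hψ : ∀ x : ℝ, PhiF t a b f x - f t * x - c * x^2 / 2 = ∫ u in (0:ℝ)..x, g u := by
    intro x
    have hFTC : ∀ u ∈ Set.uIcc (0:ℝ) x,
        HasDerivAt (fun y => PhiF t a b f y - f t * y - c * y^2 / 2) (g u) u := by
      intro u _
      have h1 : HasDerivAt (PhiF t a b f) (phiF t a b f u) u := primI_hasDerivAt hφ u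
      have h2 : HasDerivAt (fun y : ℝ => f t * y) (f t) u := by
        simpa using (hasDerivAt_id u).const_mul (f t)
      have h3 : HasDerivAt (fun y : ℝ => c * y^2 / 2) (c * u) u := by
        have h4 := ((hasDerivAt_pow 2 u).const_mul c).div_const 2
        refine h4.congr_deriv ?_
        push_cast
        ring
      exact (h1.sub h2).sub h3
    have hint := integral_eq_sub_of_hasDerivAt hFTC (hg.intervalIntegrable 0 x)
    rw [hint]
    have : PhiF t a b f 0 = 0 := integral_same
    rw [this]
    ring
  have hlo : g =o[nhds 0] fun u => u := by
    have hd := phiF_hasDerivAt_zero (t := t) (f' := f') hca hcb hdf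
    rw [hasDerivAt_iff_isLittleO] at hd
    simp only [sub_zero, smul_eq_mul, phiF_zero] at hd
    exact hd.congr' (Filter.Eventually.of_forall fun u => by simp only [hgdef]; ring)
      (Filter.Eventually.of_forall fun u => rfl)
  rw [isLittleO_iff]
  intro ε hε
  have hev := (isLittleO_iff.mp hlo) hε
  rw [Metric.eventually_nhds_iff] at hev
  obtain ⟨δ, hδ0, hδ⟩ := hev
  filter_upwards [Ioo_mem_nhdsGT_of_mem (Set.left_mem_Ico.mpr hδ0)] with x hx
  rw [hc] at hψ ⊢
  rw [hψ x]
  have hnn : (0:ℝ) ≤ ∫ u in (0:ℝ)..x, ‖g u‖ :=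
    integral_nonneg hx.1.le (fun u _ => norm_nonneg _)
  have hb1 : ‖∫ u in (0:ℝ)..x, g u‖ ≤ |∫ u in (0:ℝ)..x, ‖g u‖| :=
    norm_integral_le_abs_integral_norm
  rw [abs_of_nonneg hnn] at hb1
  have hb2 : (∫ u in (0:ℝ)..x, ‖g u‖) ≤ ∫ u in (0:ℝ)..x, ε * u := by
    apply integral_mono_on hx.1.le (hg.norm.intervalIntegrable 0 x)
      ((continuous_const.mul continuous_id).intervalIntegrable 0 x)
    intro u hu
    have hud : dist u 0 < δ := by
      rw [Real.dist_eq, sub_zero, abs_of_nonneg hu.1]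
      exact lt_of_le_of_lt hu.2 hx.2
    have := hδ hud
    rwa [Real.norm_eq_abs u, abs_of_nonneg hu.1] at this
  have hb3 : (∫ u in (0:ℝ)..x, ε * u) = ε * (x^2/2) := by
    rw [intervalIntegral.integral_const_mul, integral_id]
    ring
  calc ‖∫ u in (0:ℝ)..x, g u‖ ≤ ∫ u in (0:ℝ)..x, ‖g u‖ := hb1
    _ ≤ ε * (x^2/2) := by rw [← hb3]; exact hb2
    _ ≤ ε * ‖x^2‖ := by
        rw [Real.norm_eq_abs, abs_of_nonneg (sq_nonneg x)]
        nlinarith [sq_nonneg x, hε.le]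

lemma mul_tendsto_Ioi {τ : ℝ} (hτ : 0 < τ) :
    Filter.Tendsto (fun h : ℝ => h * τ) (nhdsWithin 0 (Set.Ioi 0)) (nhdsWithin 0 (Set.Ioi 0)) := by
  rw [tendsto_nhdsWithin_iff]
  constructor
  · have h1 : Filter.Tendsto (fun h : ℝ => h * τ) (nhds 0) (nhds (0 * τ)) :=
      (continuous_id.mul continuous_const).tendsto 0
    rw [zero_mul] at h1
    exact h1.mono_left nhdsWithin_le_nhds
  · exact eventually_mem_nhdsWithin.mono (fun h hh => mul_pos hh hτ)

lemma v_asym (hca : Continuous a) (hcb : Continuous b)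
    (hdf : ∀ s, HasDerivAt f (f' s) s) {τ : ℝ} (hτ : 0 ≤ τ) :
    (fun h : ℝ => PhiF t a b f (h * τ) / h -
        (f t * τ + (f' t + (b t - a t) * f t) * τ^2 / 2 * h))
      =o[nhdsWithin 0 (Set.Ioi 0)] fun h => h := by
  rcases hτ.eq_or_lt with rfl | hτ'
  · have : ∀ h : ℝ, PhiF t a b f (h * 0) / h -
        (f t * 0 + (f' t + (b t - a t) * f t) * 0^2 / 2 * h) = 0 := by
      intro h
      simp [PhiF, integral_same]
    simp only [this]
    exact isLittleO_zero _ _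
  · have hT := (Phi_taylor (t := t) hca hcb hdf).comp_tendsto (mul_tendsto_Ioi hτ')
    have hO : (fun h : ℝ => (h * τ)^2) =O[nhdsWithin 0 (Set.Ioi 0)] fun h => h^2 := by
      have := (isBigO_refl (fun h : ℝ => h^2) (nhdsWithin 0 (Set.Ioi 0))).const_mul_left (τ^2)
      exact this.congr' (Filter.Eventually.of_forall (fun h => by ring)) EventuallyEq.rfl
    have h1 := (hT.trans_isBigO hO).mul_isBigO
      (isBigO_refl (fun h : ℝ => h⁻¹) (nhdsWithin 0 (Set.Ioi 0)))
    refine h1.congr' ?_ ?_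
    · filter_upwards [eventually_mem_nhdsWithin] with h (hh : (0:ℝ) < h)
      have hne : h ≠ 0 := ne_of_gt hh
      show (PhiF t a b f (h*τ) - f t * (h*τ) - (f' t + (b t - a t) * f t) * (h*τ)^2 / 2) * h⁻¹
          = PhiF t a b f (h * τ) / h - (f t * τ + (f' t + (b t - a t) * f t) * τ^2 / 2 * h)
      field_simp
      ring
    · filter_upwards [eventually_mem_nhdsWithin] with h (hh : (0:ℝ) < h)
      show h^2 * h⁻¹ = h
      field_simp [pow_two]

lemma exp_asym (hcb : Continuous b) :
    (fun h : ℝ => Real.exp (-(primI (fun s => b (t+s)) h)) - (1 - b t * h))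
      =o[nhds 0] fun h => h := by
  have hB : HasDerivAt (primI (fun s => b (t+s))) (b (t+0)) 0 :=
    primI_hasDerivAt (hcb.comp (by continuity)) 0
  have hE := (hB.neg).exp
  rw [hasDerivAt_iff_isLittleO] at hE
  simp only [primI_zero, neg_zero, Real.exp_zero, sub_zero, smul_eq_mul, add_zero] at hE
  refine hE.congr' (Filter.Eventually.of_forall fun h => ?_)
    (Filter.Eventually.of_forall fun h => rfl)
  simp only [Pi.neg_apply, primI_zero, neg_zero, Real.exp_zero]
  ring

lemma core (hca : Continuous a) (hcb : Continuous b)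
    (hdf : ∀ s, HasDerivAt f (f' s) s) (hft : 0 < f t) :
    (∀ τ ∈ Set.Icc (0 : ℝ) 1,
      (fun h : ℝ => oneJumpIntegral t a b f h τ -
          f t * (τ + h * ((f' t / f t + b t - a t) * τ ^ 2 / 2 - b t * τ)))
        =o[nhdsWithin 0 (Set.Ioi 0)] fun h : ℝ => h) ∧
    ((fun h : ℝ => oneJumpIntegral t a b f h (1 / 2) / oneJumpIntegral t a b f h 1 -
        (1 / 2 - h / 8 * (f' t / f t + b t - a t)))
      =o[nhdsWithin 0 (Set.Ioi 0)] fun h : ℝ => h) := by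
  have hcf : Continuous f := Differentiable.continuous (fun x => (hdf x).differentiableAt)
  set χ : ℝ := f' t / f t + b t - a t with hχ
  have hc2 : f' t + (b t - a t) * f t = f t * χ := by
    rw [hχ]; field_simp; ring
  set c : ℝ := f t * χ with hcdef
  set L : Filter ℝ := nhdsWithin 0 (Set.Ioi 0) with hL
  -- basic eventual facts
  have hpos : ∀ᶠ h : ℝ in L, 0 < h := eventually_mem_nhdsWithin
  have hIolittle : (fun h : ℝ => h) =o[L] (fun _ => (1:ℝ)) := by
    rw [isLittleO_one_iff]
    exact tendsto_id.mono_left nhdsWithin_le_nhds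
  -- little-o facts
  have hρ : (fun x => PhiF t a b f x - f t * x - c * x^2 / 2) =o[L] fun x => x^2 := by
    have := Phi_taylor (t := t) hca hcb hdf
    rw [hc2] at this
    exact this
  have hv : ∀ {τ : ℝ}, 0 ≤ τ →
      (fun h : ℝ => PhiF t a b f (h * τ) / h - (f t * τ + c * τ^2 / 2 * h)) =o[L] fun h => h := by
    intro τ hτ
    have := v_asym (t := t) hca hcb hdf hτ
    rw [hc2] at this
    exact this
  have hu : (fun h : ℝ => Real.exp (-(primI (fun s => b (t+s)) h)) - (1 - b t * h)) =o[L]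
      fun h => h := (exp_asym hcb).mono nhdsWithin_le_nhds
  -- tendsto facts for v
  have hvten : ∀ {τ : ℝ}, 0 ≤ τ →
      Filter.Tendsto (fun h : ℝ => PhiF t a b f (h * τ) / h) L (nhds (f t * τ)) := by
    intro τ hτ
    have h0 : Filter.Tendsto (fun h : ℝ => PhiF t a b f (h * τ) / h - (f t * τ + c * τ^2/2 * h))
        L (nhds 0) := isLittleO_one_iff ℝ |>.mp ((hv hτ).trans hIolittle)
    have h1 : Filter.Tendsto (fun h : ℝ => f t * τ + c * τ^2/2 * h) L (nhds (f t * τ)) := by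
      have hcont : Continuous (fun h : ℝ => f t * τ + c * τ^2/2 * h) := by fun_prop
      have h2 := (hcont.tendsto 0).mono_left (nhdsWithin_le_nhds (s := Set.Ioi (0:ℝ)))
      simpa using h2
    have := h0.add h1
    simpa using this
  constructor
  · -- part (i)
    intro τ hτ
    set u : ℝ → ℝ := fun h => Real.exp (-(primI (fun s => b (t+s)) h)) with hudef
    set v : ℝ → ℝ := fun h => PhiF t a b f (h * τ) / h with hvdef
    have huO : u =O[L] (fun _ => (1:ℝ)) := by
      have ht1 : Filter.Tendsto u L (nhds 1) := by
        have : Filter.Tendsto (fun h : ℝ => u h - (1 - b t * h)) L (nhds 0) :=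
          isLittleO_one_iff ℝ |>.mp (hu.trans hIolittle)
        have h2 : Filter.Tendsto (fun h : ℝ => 1 - b t * h) L (nhds 1) := by
          have hcont : Continuous (fun h : ℝ => 1 - b t * h) := by fun_prop
          have h3 := (hcont.tendsto 0).mono_left (nhdsWithin_le_nhds (s := Set.Ioi (0:ℝ)))
          simpa using h3
        simpa using this.add h2
      exact ht1.isBigO_one ℝ
    have hvO : v =O[L] (fun _ => (1:ℝ)) := (hvten hτ.1).isBigO_one ℝ
    have hu0O : (fun h : ℝ => 1 - b t * h) =O[L] (fun _ => (1:ℝ)) := by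
      have h2 : Filter.Tendsto (fun h : ℝ => 1 - b t * h) L (nhds 1) := by
        have hcont : Continuous (fun h : ℝ => 1 - b t * h) := by fun_prop
        have h3 := (hcont.tendsto 0).mono_left (nhdsWithin_le_nhds (s := Set.Ioi (0:ℝ)))
        simpa using h3
      exact h2.isBigO_one ℝ
    have T1 : (fun h : ℝ => (u h - (1 - b t * h)) * v h) =o[L] fun h => h := by
      have := hu.mul_isBigO hvO
      simpa using this
    have T2 : (fun h : ℝ => (1 - b t * h) * (v h - (f t * τ + c * τ^2/2 * h))) =o[L]
        fun h => h := by
      have := hu0O.mul_isLittleO (hv hτ.1)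
      simpa using this
    have T3 : (fun h : ℝ => (-(b t * c * τ^2/2)) * h^2) =o[L] fun h => h := by
      have h2 : (fun h : ℝ => h^2) =o[L] fun h => h := by
        have := hIolittle.mul_isBigO (isBigO_refl (fun h : ℝ => h) L)
        refine this.congr' (Filter.Eventually.of_forall fun h => by ring) ?_
        exact Filter.Eventually.of_forall fun h => by simp
      exact h2.const_mul_left _
    have hsum := (T1.add T2).add T3
    refine hsum.congr' ?_ EventuallyEq.rfl
    filter_upwards [hpos] with h hh
    have hI : oneJumpIntegral t a b f h τ = u h * v h :=
      oneJump_eq hca hcb hcf (ne_of_gt hh) τ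
    show (u h - (1 - b t * h)) * v h + (1 - b t * h) * (v h - (f t * τ + c * τ^2/2 * h)) +
        (-(b t * c * τ^2/2)) * h^2
      = oneJumpIntegral t a b f h τ - f t * (τ + h * (χ * τ^2 / 2 - b t * τ))
    rw [hI, hcdef]
    ring
  · -- part (ii)
    have hΦpos : ∀ᶠ h in L, 0 < PhiF t a b f h := by
      have hw : Filter.Tendsto (fun h : ℝ => PhiF t a b f (h * 1) / h) L (nhds (f t * 1)) :=
        hvten zero_le_one
      simp only [mul_one] at hw
      filter_upwards [hpos, hw.eventually (eventually_gt_nhds hft)]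
        with h hh hwh
      have := mul_pos hwh hh
      rwa [div_mul_cancel₀ _ (ne_of_gt hh)] at this
    -- N = o(h²)
    set q : ℝ → ℝ := fun h => 1/2 - h/8 * χ with hqdef
    set N : ℝ → ℝ := fun h => PhiF t a b f (h/2) - q h * PhiF t a b f h with hNdef
    have hρhalf : (fun h : ℝ => PhiF t a b f (h/2) - f t * (h/2) - c * (h/2)^2/2) =o[L]
        fun h => h^2 := by
      have htend : Filter.Tendsto (fun h : ℝ => h/2) L L := by
        have := mul_tendsto_Ioi (by norm_num : (0:ℝ) < 1/2)
        simpa only [hL, mul_one_div] using this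
      have hcomp := hρ.comp_tendsto htend
      have hb : ((fun x : ℝ => x^2) ∘ fun h : ℝ => h/2) =O[L] fun h : ℝ => h^2 := by
        apply IsBigO.of_bound (1/4)
        refine Filter.Eventually.of_forall fun h => ?_
        simp only [Function.comp_apply, Real.norm_eq_abs]
        rw [abs_of_nonneg (sq_nonneg _), abs_of_nonneg (sq_nonneg _)]
        nlinarith [sq_nonneg h]
      exact hcomp.trans_isBigO hb
    have hqO : q =O[L] (fun _ => (1:ℝ)) := by
      have h2 : Filter.Tendsto q L (nhds (1/2)) := by
        have hcont : Continuous (fun h : ℝ => 1/2 - h/8 * χ) := by fun_prop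
        have h3 := (hcont.tendsto 0).mono_left (nhdsWithin_le_nhds (s := Set.Ioi (0:ℝ)))
        simpa [hqdef] using h3
      exact h2.isBigO_one ℝ
    have hN : N =o[L] fun h => h^2 := by
      have T1 := hρhalf
      have T2 : (fun h : ℝ => q h * (PhiF t a b f h - f t * h - c * h^2/2)) =o[L]
          fun h => h^2 := by
        have := hqO.mul_isLittleO hρ
        simpa using this
      have T3 : (fun h : ℝ => (χ * c / 16) * h^3) =o[L] fun h => h^2 := by
        have h2 : (fun h : ℝ => h^3) =o[L] fun h => h^2 := by
          have := hIolittle.mul_isBigO (isBigO_refl (fun h : ℝ => h^2) L)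
          refine this.congr' (Filter.Eventually.of_forall fun h => by ring) ?_
          exact Filter.Eventually.of_forall fun h => by simp
        exact h2.const_mul_left _
      have hsum := (T1.sub T2).add T3
      refine hsum.congr' (Filter.Eventually.of_forall fun h => ?_) EventuallyEq.rfl
      show PhiF t a b f (h/2) - f t * (h/2) - c * (h/2)^2/2 -
          q h * (PhiF t a b f h - f t * h - c * h^2/2) + (χ * c / 16) * h^3 = N h
      rw [hNdef, hqdef, hcdef]
      ring
    -- Φ⁻¹ = O(h⁻¹)
    have hΦinv : (fun h : ℝ => (PhiF t a b f h)⁻¹) =O[L] fun h => h⁻¹ := by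
      have hw : Filter.Tendsto (fun h : ℝ => PhiF t a b f (h * 1) / h) L (nhds (f t * 1)) :=
        hvten zero_le_one
      simp only [mul_one] at hw
      have hwi : Filter.Tendsto (fun h : ℝ => (PhiF t a b f h / h)⁻¹) L (nhds (f t)⁻¹) := by
        have := hw.inv₀ (by positivity)
        simpa using this
      have hO1 : (fun h : ℝ => (PhiF t a b f h / h)⁻¹) =O[L] (fun _ => (1:ℝ)) :=
        hwi.isBigO_one ℝ
      have := hO1.mul (isBigO_refl (fun h : ℝ => h⁻¹) L)
      refine this.congr' ?_ ?_
      · filter_upwards [hpos, hΦpos] with h hh hΦ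
        show (PhiF t a b f h / h)⁻¹ * h⁻¹ = (PhiF t a b f h)⁻¹
        field_simp
      · exact Filter.Eventually.of_forall fun h => by simp
    have hfinal := hN.mul_isBigO hΦinv
    refine hfinal.congr' ?_ ?_
    · filter_upwards [hpos, hΦpos] with h hh hΦ
      have hne : h ≠ 0 := ne_of_gt hh
      have hΦne : PhiF t a b f h ≠ 0 := ne_of_gt hΦ
      have hI1 : oneJumpIntegral t a b f h (1/2) =
          Real.exp (-(primI (fun s => b (t+s)) h)) * (PhiF t a b f (h * (1/2)) / h) :=
        oneJump_eq hca hcb hcf hne _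
      have hI2 : oneJumpIntegral t a b f h 1 =
          Real.exp (-(primI (fun s => b (t+s)) h)) * (PhiF t a b f (h * 1) / h) :=
        oneJump_eq hca hcb hcf hne _
      show N h * (PhiF t a b f h)⁻¹ =
          oneJumpIntegral t a b f h (1/2) / oneJumpIntegral t a b f h 1 - (1/2 - h/8 * χ)
      rw [hI1, hI2, hNdef, hqdef]
      have hexp : Real.exp (-(primI (fun s => b (t+s)) h)) ≠ 0 := Real.exp_ne_zero _
      rw [mul_one, show h * (1/2) = h/2 by ring]
      field_simp
    · filter_upwards [hpos] with h hh
      show h^2 * h⁻¹ = h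
      field_simp [pow_two]

end aux

open MeasureTheory intervalIntegral Filter in
/-- Let `t ∈ (0,1)`, let `a, b` be continuous on a neighbourhood of `t`, and
let `f` be continuously differentiable (with derivative `f'`) on a neighbourhood of `t` with
`f(t) > 0`.  Set `χ := f'(t)/f(t) + b(t) − a(t)`.  Then, as `h → 0⁺`:
(i) for every fixed `τ ∈ [0,1]`, `I(h,τ) = f(t)·(τ + h·(χ·τ²/2 − b(t)·τ)) + o(h)`;
(ii) `I(h,1/2)/I(h,1) = 1/2 − (h/8)·χ + o(h)`. -/
theorem stmt13 (t : ℝ) (ht : t ∈ Set.Ioo (0 : ℝ) 1)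
    (a b f f' : ℝ → ℝ)
    (ha : ∃ U ∈ nhds t, ContinuousOn a U)
    (hb : ∃ U ∈ nhds t, ContinuousOn b U)
    (hf : ∃ U ∈ nhds t, (∀ s ∈ U, HasDerivAt f (f' s) s) ∧ ContinuousOn f' U)
    (hft : 0 < f t) :
    (∀ τ ∈ Set.Icc (0 : ℝ) 1,
      (fun h : ℝ => oneJumpIntegral t a b f h τ -
          f t * (τ + h * ((f' t / f t + b t - a t) * τ ^ 2 / 2 - b t * τ)))
        =o[nhdsWithin 0 (Set.Ioi 0)] fun h : ℝ => h) ∧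
    ((fun h : ℝ => oneJumpIntegral t a b f h (1 / 2) / oneJumpIntegral t a b f h 1 -
        (1 / 2 - h / 8 * (f' t / f t + b t - a t)))
      =o[nhdsWithin 0 (Set.Ioi 0)] fun h : ℝ => h) := by
  clear ht
  obtain ⟨Ua, hUa, hca⟩ := ha
  obtain ⟨Ub, hUb, hcb⟩ := hb
  obtain ⟨Uf, hUf, hdf, hcf'⟩ := hf
  have hU : Ua ∩ Ub ∩ Uf ∈ nhds t := Filter.inter_mem (Filter.inter_mem hUa hUb) hUf
  obtain ⟨ε, hε0, hball⟩ := Metric.nhds_basis_closedBall.mem_iff.mp hU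
  set p : ℝ → ℝ := fun y => max (-ε) (min ε y) with hp
  have hpcont : Continuous p := continuous_const.max (continuous_const.min continuous_id)
  have hpabs : ∀ y : ℝ, |p y| ≤ ε := by
    intro y
    rw [abs_le]
    constructor
    · exact le_max_left _ _
    · exact max_le (by linarith) (min_le_left _ _)
  have hpmem : ∀ y : ℝ, t + p y ∈ Metric.closedBall t ε := by
    intro y
    rw [Metric.mem_closedBall, Real.dist_eq]
    simpa using hpabs y
  have hpid : ∀ y : ℝ, |y| ≤ ε → p y = y := by
    intro y hy
    obtain ⟨h1, h2⟩ := abs_le.mp hy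
    rw [hp]
    simp only
    rw [min_eq_right h2, max_eq_right h1]
  set m : ℝ → ℝ := fun x => t + p (x - t) with hm
  have hmcont : Continuous m := continuous_const.add (hpcont.comp (continuous_id.sub continuous_const))
  have hmmem : ∀ x, m x ∈ Metric.closedBall t ε := fun x => hpmem (x - t)
  have hmid : ∀ x, |x - t| ≤ ε → m x = x := by
    intro x hx
    rw [hm]; simp only; rw [hpid _ hx]; ring
  have hsub : Metric.closedBall t ε ⊆ Ua ∩ Ub ∩ Uf := hball
  set A : ℝ → ℝ := fun x => a (m x) with hA
  set B2 : ℝ → ℝ := fun x => b (m x) with hB2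
  set F' : ℝ → ℝ := fun x => f' (m x) with hF'
  have hcA : Continuous A :=
    (hca.mono (fun x hx => (hsub hx).1.1)).comp_continuous hmcont hmmem
  have hcB : Continuous B2 :=
    (hcb.mono (fun x hx => (hsub hx).1.2)).comp_continuous hmcont hmmem
  have hcF' : Continuous F' :=
    (hcf'.mono (fun x hx => (hsub hx).2)).comp_continuous hmcont hmmem
  set F : ℝ → ℝ := fun x => f t + ∫ s in t..x, F' s with hF
  have hdF : ∀ x, HasDerivAt F (F' x) x := by
    intro x
    exact (integral_hasDerivAt_right (hcF'.intervalIntegrable t x)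
      (hcF'.stronglyMeasurableAtFilter _ _) hcF'.continuousAt).const_add (f t)
  have huIcc : ∀ x : ℝ, |x - t| ≤ ε → ∀ s ∈ Set.uIcc t x, |s - t| ≤ ε := by
    intro x hx s hs
    rw [Set.uIcc_eq_union] at hs
    rw [abs_le] at hx ⊢
    rcases hs with hs | hs <;> rcases hs with ⟨h1, h2⟩ <;> constructor <;> linarith
  have hFeq : ∀ x : ℝ, |x - t| ≤ ε → F x = f x := by
    intro x hx
    have hmemU : ∀ s ∈ Set.uIcc t x, s ∈ Metric.closedBall t ε := by
      intro s hs
      rw [Metric.mem_closedBall, Real.dist_eq]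
      exact huIcc x hx s hs
    have h1 : Set.EqOn F' f' (Set.uIcc t x) := by
      intro s hs
      rw [hF']; simp only
      rw [hmid s (huIcc x hx s hs)]
    have h2 : (∫ s in t..x, f' s) = f x - f t := by
      apply integral_eq_sub_of_hasDerivAt
      · exact fun s hs => hdf s ((hsub (hmemU s hs)).2)
      · exact ((hcf'.mono (fun s hs => (hsub (hmemU s hs)).2)).intervalIntegrable)
    rw [hF]; simp only
    rw [integral_congr h1, h2]; ring
  have hmt : m t = t := hmid t (by simpa using hε0.le)
  have hAt : A t = a t := by rw [hA]; simp only [hmt]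
  have hBt : B2 t = b t := by rw [hB2]; simp only [hmt]
  have hFt : F t = f t := hFeq t (by simpa using hε0.le)
  have hF't : F' t = f' t := by rw [hF']; simp only [hmt]
  have hFtpos : 0 < F t := by rw [hFt]; exact hft
  have hcore := core (t := t) hcA hcB hdF hFtpos
  have hIeq : ∀ᶠ h : ℝ in nhdsWithin 0 (Set.Ioi 0), ∀ τ' ∈ Set.Icc (0:ℝ) 1,
      oneJumpIntegral t A B2 F h τ' = oneJumpIntegral t a b f h τ' := by
    filter_upwards [Ioo_mem_nhdsGT_of_mem (Set.left_mem_Ico.mpr hε0)] with h hh τ' hτ'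
    unfold oneJumpIntegral
    apply integral_congr
    intro r hr
    rw [Set.uIcc_of_le hτ'.1] at hr
    have hr0 : 0 ≤ r := hr.1
    have hhr0 : 0 ≤ h * r := mul_nonneg hh.1.le hr0
    have hhrh : h * r ≤ h := by
      nlinarith [hr.2, hτ'.2, hh.1.le]
    have hsb : ∀ s : ℝ, 0 ≤ s → s ≤ h → |s| ≤ ε := by
      intro s h1 h2
      rw [abs_of_nonneg h1]
      linarith [hh.2]
    have e1 : (∫ s in (0:ℝ)..(h*r), A (t+s)) = ∫ s in (0:ℝ)..(h*r), a (t+s) := by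
      apply integral_congr
      intro s hs
      rw [Set.uIcc_of_le hhr0] at hs
      have := hsb s hs.1 (le_trans hs.2 hhrh)
      rw [hA]; simp only
      rw [hmid (t+s) (by simpa using this)]
    have e2 : (∫ s in (h*r)..h, B2 (t+s)) = ∫ s in (h*r)..h, b (t+s) := by
      apply integral_congr
      intro s hs
      rw [Set.uIcc_of_le hhrh] at hs
      have := hsb s (le_trans hhr0 hs.1) hs.2
      rw [hB2]; simp only
      rw [hmid (t+s) (by simpa using this)]
    have e3 : F (t + h*r) = f (t + h*r) := by
      apply hFeq
      have := hsb (h*r) hhr0 hhrh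
      simpa using this
    beta_reduce
    rw [e1, e2, e3]
  constructor
  · intro τ hτ
    refine (hcore.1 τ hτ).congr' ?_ EventuallyEq.rfl
    filter_upwards [hIeq] with h hh
    rw [hh τ hτ, hAt, hBt, hFt, hF't]
  · refine hcore.2.congr' ?_ EventuallyEq.rfl
    filter_upwards [hIeq] with h hh
    rw [hh (1/2) (by norm_num), hh 1 (by norm_num), hAt, hBt, hFt, hF't]
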